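/- Let m, n be natural numbers, a ∈ ℝ^m, α ∈ ℝ^{m×n}, Σ₀ ∈ ℝ^{m×m} positive semidefinite, and let Σ^s ∈ ℝ^{(m+n)×(m+n)} be positive semidefinite with blocks Σ_{**} ∈ ℝ^{m×m}, Σ_{*t} ∈ ℝ^{m×n}, Σ_{t*} = Σ_{*t}ᵀ, Σ_{tt} ∈ ℝ^{n×n}. Let L ∈ ℝ^{(m+n)×(m+n)} be any matrix with L Lᵀ = Σ^s, with row blocks L_* ∈ ℝ^{m×(m+n)} (first m rows) and L_t ∈ ℝ^{n×(m+n)} (last n rows). Then (N(0, I_{m+n})).bind (fun ε => N(a + (L_* − α L_t) ε, Σ₀)) = N(a, Σ₀ + Σ^{boost}), where Σ^{boost} = Σ_{**} + α Σ_{tt} αᵀ − α Σ_{t*} − Σ_{*t} αᵀ. (Finite-dimensional core of Proposition 2: averaging the target posterior predictions over samples ε of the source posterior yields a Gaussian whose covariance is the target posterior covariance Σ₀ augmented by the boost term Σ^{boost}.) -/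

import Mathlib

open MeasureTheory ProbabilityTheory Matrix

open Classical in
/-- A measurable square root of a positive semidefinite real matrix
(junk value `0` if the matrix is not positive semidefinite). -/
noncomputable def matSqrt {ι : Type*} [Fintype ι] [DecidableEq ι]
    (S : Matrix ι ι ℝ) : Matrix ι ι ℝ :=
  if h : S.PosSemidef then
    (h.1.eigenvectorUnitary : Matrix ι ι ℝ) * diagonal ((↑) ∘ (√·) ∘ h.1.eigenvalues) *
      (star h.1.eigenvectorUnitary : Matrix ι ι ℝ)
  else 0

/-- The standard Gaussian measure `N(0, I)` on `ι → ℝ`. -/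
noncomputable def stdGaussian (ι : Type*) [Fintype ι] : Measure (ι → ℝ) :=
  Measure.pi fun _ => gaussianReal 0 1

/-- The multivariate Gaussian measure `N(μ, S)` on `ι → ℝ`, for `S` positive
semidefinite, realized as the pushforward of the standard Gaussian under the
affine map `x ↦ μ + √S x`. -/
noncomputable def multiGaussian {ι : Type*} [Fintype ι] [DecidableEq ι]
    (μ : ι → ℝ) (S : Matrix ι ι ℝ) : Measure (ι → ℝ) :=
  (stdGaussian ι).map fun x => μ + (matSqrt S).mulVec x

open scoped ENNReal

lemma measurable_mulVec'' {m ι : Type*} [Fintype ι] (A : Matrix m ι ℝ) :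
    Measurable (A.mulVec) := by
  refine measurable_pi_lambda _ fun i => ?_
  simpa [Matrix.mulVec, dotProduct] using
    Finset.measurable_sum Finset.univ fun j _ => (show Measurable fun c : ι → ℝ => A i j * c j by fun_prop)

theorem lintegral_pi_prod {ι : Type*} [Fintype ι] [DecidableEq ι]
    (μ : ι → Measure ℝ) [∀ i, SigmaFinite (μ i)]
    (f : ι → ℝ → ℝ≥0∞) (hf : ∀ i, Measurable (f i)) :
    ∫⁻ x, ∏ i, f i (x i) ∂Measure.pi μ = ∏ i, ∫⁻ t, f i t ∂(μ i) := by
  have hmeas : Measurable fun y : ι → ℝ => ∏ i, f i (y i) :=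
    Finset.measurable_prod _ fun i _ => (hf i).comp (measurable_pi_apply i)
  have key : ∀ s : Finset ι, ∀ x : ι → ℝ,
      (∫⋯∫⁻_s, (fun y => ∏ i, f i (y i)) ∂μ) x
        = (∏ i ∈ s, ∫⁻ t, f i t ∂(μ i)) * ∏ i ∈ sᶜ, f i (x i) := by
    intro s
    induction s using Finset.induction with
    | empty => intro x; simp
    | @insert i s hi ih =>
      intro x
      rw [lmarginal_insert _ hmeas hi]
      have step : ∀ t : ℝ,
          (∫⋯∫⁻_s, (fun y => ∏ i, f i (y i)) ∂μ) (Function.update x i t)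
            = ((∏ j ∈ s, ∫⁻ t, f j t ∂(μ j)) * ∏ j ∈ sᶜ.erase i, f j (x j)) * f i t := by
        intro t
        rw [ih]
        have hic : i ∈ sᶜ := Finset.mem_compl.2 hi
        rw [← Finset.mul_prod_erase _ _ hic]
        have : ∏ j ∈ sᶜ.erase i, f j (Function.update x i t j)
            = ∏ j ∈ sᶜ.erase i, f j (x j) := by
          refine Finset.prod_congr rfl fun j hj => ?_
          rw [Function.update_of_ne (Finset.ne_of_mem_erase hj)]
        rw [this, Function.update_self]
        ring
      simp_rw [step]
      rw [lintegral_const_mul _ (hf i), Finset.compl_insert,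
        Finset.prod_insert hi]
      ring
  have h0 := key Finset.univ (fun _ => 0)
  rw [lintegral_eq_lmarginal_univ (fun _ => (0:ℝ)), h0]
  simp

theorem pi_withDensity' {ι : Type*} [Fintype ι] [DecidableEq ι]
    (μ : ι → Measure ℝ) [∀ i, SigmaFinite (μ i)]
    (f : ι → ℝ → ℝ≥0∞) (hf : ∀ i, Measurable (f i))
    (ν : ι → Measure ℝ) [∀ i, SigmaFinite (ν i)]
    (hν : ∀ i, ν i = (μ i).withDensity (f i)) :
    Measure.pi ν = (Measure.pi μ).withDensity (fun x => ∏ i, f i (x i)) := by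
  refine (Measure.pi_eq fun s hs => ?_)
  simp_rw [hν]
  rw [withDensity_apply _ (MeasurableSet.univ_pi hs)]
  have : ∀ x : ι → ℝ, (Set.univ.pi s).indicator (fun x => ∏ i, f i (x i)) x
      = ∏ i, (s i).indicator (f i) (x i) := by
    intro x
    by_cases hx : x ∈ Set.univ.pi s
    · rw [Set.indicator_of_mem hx]
      refine Finset.prod_congr rfl fun i _ => ?_
      rw [Set.indicator_of_mem (hx i trivial)]
    · rw [Set.indicator_of_notMem hx]
      simp only [Set.mem_pi, Set.mem_univ, true_implies, not_forall] at hx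
      obtain ⟨i, hi⟩ := hx
      exact (Finset.prod_eq_zero (Finset.mem_univ i) (Set.indicator_of_notMem hi _)).symm
  rw [← lintegral_indicator (MeasurableSet.univ_pi hs)]
  simp_rw [this]
  rw [lintegral_pi_prod μ _ (fun i => (hf i).indicator (hs i))]
  refine Finset.prod_congr rfl fun i _ => ?_
  rw [lintegral_indicator (hs i), ← withDensity_apply _ (hs i)]

theorem map_withDensity_equiv {α β : Type*} [MeasurableSpace α] [MeasurableSpace β]
    (e : α ≃ᵐ β) (μ : Measure α) (f : α → ℝ≥0∞) (hf : Measurable f) :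
    (μ.withDensity f).map e = (μ.map e).withDensity (fun y => f (e.symm y)) := by
  ext s hs
  rw [Measure.map_apply e.measurable hs, withDensity_apply _ (e.measurable hs),
    withDensity_apply _ hs]
  rw [setLIntegral_map (f := fun a => f (e.symm a)) hs (hf.comp e.symm.measurable) e.measurable]
  refine (setLIntegral_congr_fun (e.measurable hs) (fun x _ => ?_)).symm
  rw [e.symm_apply_apply]

section OrthInv
open Real
variable {ι : Type*} [Fintype ι] [DecidableEq ι]

instance (ι : Type*) [Fintype ι] : IsProbabilityMeasure (stdGaussian ι) := by
  unfold _root_.stdGaussian; infer_instance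

lemma stdGaussian_eq_withDensity :
    stdGaussian ι = (volume : Measure (ι → ℝ)).withDensity
      (fun x => ∏ i, gaussianPDF 0 1 (x i)) := by
  have h1 : (gaussianReal 0 1 : Measure ℝ) = volume.withDensity (gaussianPDF 0 1) :=
    gaussianReal_of_var_ne_zero 0 one_ne_zero
  rw [_root_.stdGaussian, volume_pi]
  exact pi_withDensity' _ _ (fun _ => measurable_gaussianPDF 0 1) _ (fun _ => h1)

lemma sum_sq_mulVec_orth (O : Matrix ι ι ℝ) (hO : O * Oᵀ = 1) (x : ι → ℝ) :
    ∑ i, (Oᵀ.mulVec x i) ^ 2 = ∑ i, (x i) ^ 2 := by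
  have h1 : ∑ i, (Oᵀ.mulVec x i) ^ 2 = (Oᵀ.mulVec x) ⬝ᵥ (Oᵀ.mulVec x) := by
    simp [dotProduct, sq]
  have h2 : ∑ i, (x i) ^ 2 = x ⬝ᵥ x := by simp [dotProduct, sq]
  rw [h1, h2, Matrix.dotProduct_mulVec, Matrix.vecMul_transpose, Matrix.mulVec_mulVec, hO,
    Matrix.one_mulVec]

theorem stdGaussian_map_orth (O : Matrix ι ι ℝ) (hO : O * Oᵀ = 1) :
    (stdGaussian ι).map O.mulVec = stdGaussian ι := by
  have hO' : Oᵀ * O = 1 := mul_eq_one_comm.1 hO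
  have hdet : O.det ≠ 0 := by
    intro h
    have := congrArg Matrix.det hO
    rw [Matrix.det_mul, Matrix.det_transpose, h] at this
    simp at this
  -- measurable equiv given by O
  let e : (ι → ℝ) ≃ᵐ (ι → ℝ) :=
    { toFun := O.mulVec
      invFun := Oᵀ.mulVec
      left_inv := fun x => by rw [Matrix.mulVec_mulVec, hO', Matrix.one_mulVec]
      right_inv := fun x => by rw [Matrix.mulVec_mulVec, hO, Matrix.one_mulVec]
      measurable_toFun := measurable_mulVec'' O
      measurable_invFun := measurable_mulVec'' Oᵀ }
  have hvol : (volume : Measure (ι → ℝ)).map O.mulVec = volume := by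
    have htl : O.mulVec = ⇑(Matrix.toLin' O) := funext fun x => (Matrix.toLin'_apply O x).symm
    rw [htl, Real.map_matrix_volume_pi_eq_smul_volume_pi hdet]
    have h1 : |O.det⁻¹| = 1 := by
      have h2 : O.det * O.det = 1 := by
        have := congrArg Matrix.det hO
        rwa [Matrix.det_mul, Matrix.det_transpose, Matrix.det_one] at this
      rw [abs_eq (by norm_num : (0:ℝ) ≤ 1)]
      rcases mul_self_eq_one_iff.1 h2 with h | h
      · left; rw [h]; norm_num
      · right; rw [h]; norm_num
    rw [h1]
    simp
  have hG : Measurable fun x : ι → ℝ => ∏ i, gaussianPDF 0 1 (x i) :=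
    Finset.measurable_prod _ fun i _ =>
      (measurable_gaussianPDF 0 1).comp (measurable_pi_apply i)
  have hGinv : ∀ y : ι → ℝ, (∏ i, gaussianPDF 0 1 (e.symm y i)) = ∏ i, gaussianPDF 0 1 (y i) := by
    intro y
    have hsq := sum_sq_mulVec_orth O hO y
    have hform : ∀ z : ι → ℝ, (∏ i, gaussianPDF 0 1 (z i))
        = ENNReal.ofReal ((√(2 * π))⁻¹ ^ (Fintype.card ι) * rexp (- (∑ i, (z i) ^ 2) / 2)) := by
      intro z
      simp only [gaussianPDF]
      rw [← ENNReal.ofReal_prod_of_nonneg (fun i _ => gaussianPDFReal_nonneg 0 1 (z i))]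
      congr 1
      simp only [gaussianPDFReal, NNReal.coe_one, mul_one, sub_zero]
      rw [Finset.prod_mul_distrib, Finset.prod_const, ← Real.exp_sum, Finset.card_univ]
      congr 1
      rw [← Finset.sum_div, Finset.sum_neg_distrib, neg_div]
    rw [hform, hform]
    have hsq' : ∑ i, (e.symm y i) ^ 2 = ∑ i, (y i) ^ 2 := hsq
    rw [hsq']
  calc (stdGaussian ι).map O.mulVec
      = ((volume : Measure (ι → ℝ)).withDensity (fun x => ∏ i, gaussianPDF 0 1 (x i))).map e := by
        rw [stdGaussian_eq_withDensity]; rfl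
    _ = ((volume : Measure (ι → ℝ)).map e).withDensity (fun y => ∏ i, gaussianPDF 0 1 (e.symm y i)) :=
        map_withDensity_equiv e _ _ hG
    _ = (volume : Measure (ι → ℝ)).withDensity (fun y => ∏ i, gaussianPDF 0 1 (y i)) := by
        rw [show ((volume : Measure (ι → ℝ)).map e) = (volume : Measure (ι → ℝ)).map O.mulVec from rfl,
          hvol]
        congr 1
        funext y
        exact hGinv y
    _ = stdGaussian ι := (stdGaussian_eq_withDensity).symm

end OrthInv

section Select
open Classical in
theorem stdGaussian_map_comp_embedding {ι κ : Type*} [Fintype ι] [Fintype κ] (e : κ ↪ ι) :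
    (stdGaussian ι).map (fun x => x ∘ e) = stdGaussian κ := by
  classical
  let κ' := {i : ι // i ∉ Set.range e}
  let σ : κ ⊕ κ' ≃ ι :=
    (Equiv.sumCongr (Equiv.ofInjective e e.injective) (Equiv.refl κ')).trans
      (Equiv.sumCompl (· ∈ Set.range e))
  have hσl : ∀ k : κ, σ (Sum.inl k) = e k := fun k => rfl
  -- stdGaussian over the sum type maps to stdGaussian ι under piCongrLeft
  have h1 : (stdGaussian (κ ⊕ κ')).map (MeasurableEquiv.piCongrLeft (fun _ => ℝ) σ)
      = stdGaussian ι :=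
    (measurePreserving_piCongrLeft (fun _ : ι => gaussianReal 0 1) σ).map_eq
  have h2 : ((fun x : ι → ℝ => x ∘ e) ∘ (MeasurableEquiv.piCongrLeft (fun _ => ℝ) σ))
      = fun y : (κ ⊕ κ') → ℝ => y ∘ Sum.inl := by
    funext y
    funext k
    have h := Equiv.piCongrLeft_apply_apply (fun _ : ι => ℝ) σ y (Sum.inl k)
    show (Equiv.piCongrLeft (fun _ : ι => ℝ) σ) y (e k) = y (Sum.inl k)
    rw [← hσl k]
    exact h
  have hmeas_sel : Measurable fun x : ι → ℝ => x ∘ e :=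
    measurable_pi_lambda _ fun k => measurable_pi_apply (e k)
  rw [← h1, Measure.map_map hmeas_sel (MeasurableEquiv.measurable _), h2]
  -- now: map (· ∘ Sum.inl) over stdGaussian (κ ⊕ κ')
  have h3 : (fun y : (κ ⊕ κ') → ℝ => y ∘ Sum.inl)
      = Prod.fst ∘ (MeasurableEquiv.sumPiEquivProdPi (fun _ : κ ⊕ κ' => ℝ)) := rfl
  have h4 : (stdGaussian (κ ⊕ κ')).map
        (MeasurableEquiv.sumPiEquivProdPi (fun _ : κ ⊕ κ' => ℝ))
      = (stdGaussian κ).prod (stdGaussian κ') :=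
    (measurePreserving_sumPiEquivProdPi (fun _ : κ ⊕ κ' => gaussianReal 0 1)).map_eq
  rw [h3, ← Measure.map_map measurable_fst (MeasurableEquiv.measurable _), h4]
  rw [Measure.map_fst_prod]
  simp
end Select

theorem bind_eq_map_prod {α β γ : Type*} [MeasurableSpace α] [MeasurableSpace β]
    [MeasurableSpace γ] (μ : Measure α) (ν : Measure β) [SFinite ν]
    (g : α → β → γ) (hg : Measurable (Function.uncurry g)) :
    μ.bind (fun a => ν.map (g a)) = (μ.prod ν).map (Function.uncurry g) := by
  have hga : ∀ a, Measurable (g a) := fun a => hg.comp measurable_prodMk_left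
  have hfam : Measurable fun a => ν.map (g a) := by
    refine Measure.measurable_of_measurable_coe _ fun t ht => ?_
    have : (fun a => (ν.map (g a)) t) = fun a => ν (Prod.mk a ⁻¹' (Function.uncurry g ⁻¹' t)) := by
      funext a
      rw [Measure.map_apply (hga a) ht]
      rfl
    rw [this]
    exact measurable_measure_prodMk_left (hg ht)
  ext s hs
  rw [Measure.bind_apply hs hfam.aemeasurable, Measure.map_apply hg hs,
    Measure.prod_apply (hg hs)]
  refine lintegral_congr fun a => ?_
  rw [Measure.map_apply (hga a) hs]
  rfl

section Canon
open Classical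

theorem map_mulVec_canon {m : ℕ} {ι : Type*} [Fintype ι] [DecidableEq ι] (e : Fin m ↪ ι)
    (C : Matrix (Fin m) (Fin m) ℝ) (hC : C.PosSemidef)
    (A : Matrix (Fin m) ι ℝ) (hA : A * Aᵀ = C) :
    (stdGaussian ι).map A.mulVec = (stdGaussian (Fin m)).map
      ((hC.1.eigenvectorUnitary : Matrix (Fin m) (Fin m) ℝ)
        * diagonal (fun i => Real.sqrt (hC.1.eigenvalues i))
        * diagonal (fun i => if hC.1.eigenvalues i = 0 then (0:ℝ) else 1)).mulVec := by
  set U : Matrix (Fin m) (Fin m) ℝ := (hC.1.eigenvectorUnitary : Matrix (Fin m) (Fin m) ℝ)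
    with hUdef
  set d : Fin m → ℝ := hC.1.eigenvalues with hddef
  have hdnn : ∀ i, 0 ≤ d i := fun i => hC.eigenvalues_nonneg i
  have hstarU : star U = Uᵀ := by
    rw [Matrix.star_eq_conjTranspose, Matrix.conjTranspose_eq_transpose_of_trivial]
  have hU2 : U * Uᵀ = 1 := by
    rw [← hstarU]; exact Matrix.mem_unitaryGroup_iff.1 hC.1.eigenvectorUnitary.2
  have hU1 : Uᵀ * U = 1 := by
    rw [← hstarU]; exact Matrix.mem_unitaryGroup_iff'.1 hC.1.eigenvectorUnitary.2
  have hspec : C = U * diagonal d * Uᵀ := by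
    have h := hC.1.spectral_theorem
    rw [Unitary.conjStarAlgAut_apply, ← hUdef, ← hddef] at h
    rwa [hstarU, RCLike.ofReal_real_eq_id, Function.id_comp] at h
  set W : Matrix (Fin m) ι ℝ := Uᵀ * A with hWdef
  have hWW : W * Wᵀ = diagonal d := by
    rw [hWdef, Matrix.transpose_mul, Matrix.transpose_transpose]
    calc Uᵀ * A * (Aᵀ * U) = Uᵀ * (A * Aᵀ) * U := by simp only [Matrix.mul_assoc]
      _ = Uᵀ * (U * diagonal d * Uᵀ) * U := by rw [hA, hspec]
      _ = (Uᵀ * U) * diagonal d * (Uᵀ * U) := by simp only [Matrix.mul_assoc]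
      _ = diagonal d := by rw [hU1]; simp
  have hWrow : ∀ i, d i = 0 → ∀ j, W i j = 0 := by
    intro i hdi j
    have hsum : ∑ k, W i k * W i k = 0 := by
      have h : (W * Wᵀ) i i = d i := by rw [hWW]; simp
      rw [Matrix.mul_apply] at h
      simpa [hdi] using h
    have h := (Finset.sum_eq_zero_iff_of_nonneg (fun k _ => mul_self_nonneg (W i k))).1 hsum
    exact mul_self_eq_zero.1 (h j (Finset.mem_univ j))
  set sdInv : Fin m → ℝ := fun i => if d i = 0 then 0 else (Real.sqrt (d i))⁻¹ with hsdInv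
  set V : Matrix (Fin m) ι ℝ := diagonal sdInv * W with hVdef
  have hVzero : ∀ i, d i = 0 → ∀ j, V i j = 0 := by
    intro i hdi j
    rw [hVdef, Matrix.diagonal_mul]
    simp [hsdInv, hdi]
  have hsd_ne : ∀ i, d i ≠ 0 → Real.sqrt (d i) ≠ 0 := by
    intro i hdi
    rw [Real.sqrt_ne_zero']
    exact lt_of_le_of_ne (hdnn i) (Ne.symm hdi)
  have h2 : diagonal (fun i => Real.sqrt (d i) * sdInv i) * W = W := by
    ext i j
    rw [Matrix.diagonal_mul]
    by_cases hdi : d i = 0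
    · rw [hWrow i hdi j]; ring
    · rw [hsdInv]
      simp only [hdi, if_false]
      rw [mul_inv_cancel₀ (hsd_ne i hdi), one_mul]
  have hfact : (U * diagonal (fun i => Real.sqrt (d i))) * V = A := by
    calc (U * diagonal (fun i => Real.sqrt (d i))) * V
        = U * (diagonal (fun i => Real.sqrt (d i)) * diagonal sdInv * W) := by
          rw [hVdef]; simp only [Matrix.mul_assoc]
      _ = U * W := by rw [Matrix.diagonal_mul_diagonal, h2]
      _ = A := by rw [hWdef, ← Matrix.mul_assoc, hU2, Matrix.one_mul]
  have hVV : V * Vᵀ = diagonal (fun i => if d i = 0 then (0:ℝ) else 1) := by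
    calc V * Vᵀ = diagonal sdInv * (W * Wᵀ) * diagonal sdInv := by
          rw [hVdef, Matrix.transpose_mul, Matrix.diagonal_transpose]
          simp only [Matrix.mul_assoc]
      _ = diagonal sdInv * diagonal d * diagonal sdInv := by rw [hWW]
      _ = diagonal (fun i => sdInv i * d i * sdInv i) := by
          rw [Matrix.diagonal_mul_diagonal, Matrix.diagonal_mul_diagonal]
      _ = diagonal (fun i => if d i = 0 then (0:ℝ) else 1) := by
          have hfun : (fun i => sdInv i * d i * sdInv i)
              = fun i => if d i = 0 then (0:ℝ) else 1 := by
            funext i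
            by_cases hdi : d i = 0
            · simp [hsdInv, hdi]
            · have hss : Real.sqrt (d i) * Real.sqrt (d i) = d i := Real.mul_self_sqrt (hdnn i)
              simp only [hsdInv, hdi, if_false]
              have key : (Real.sqrt (d i))⁻¹ * d i * (Real.sqrt (d i))⁻¹
                  = d i / (Real.sqrt (d i) * Real.sqrt (d i)) := by ring
              rw [key, hss, div_self hdi]
          rw [hfun]
  -- orthonormal basis extension
  set E : Matrix (Fin m) (Fin m) ℝ := diagonal (fun i => if d i = 0 then (0:ℝ) else 1) with hEdef
  set v' : ι → EuclideanSpace ℝ ι :=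
    Function.extend e (fun i => (WithLp.equiv 2 (ι → ℝ)).symm (V i)) 0 with hv'def
  have hv'e : ∀ i : Fin m, v' (e i) = (WithLp.equiv 2 (ι → ℝ)).symm (V i) := fun i =>
    Function.Injective.extend_apply e.injective _ _ i
  set sE : Set ι := e '' {i | d i ≠ 0} with hsEdef
  have hortho : Orthonormal ℝ (sE.restrict v') := by
    rw [orthonormal_iff_ite]
    rintro ⟨x, hx⟩ ⟨y, hy⟩
    obtain ⟨i, hdi, rfl⟩ := hx
    obtain ⟨j, hdj, rfl⟩ := hy
    have hres : ∀ (z : ι) (hz : z ∈ sE), sE.restrict v' ⟨z, hz⟩ = v' z := fun _ _ => rfl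
    change inner ℝ (v' (e i)) (v' (e j)) = _
    rw [hv'e, hv'e]
    have hinner : (inner ℝ ((WithLp.equiv 2 (ι → ℝ)).symm (V i))
        ((WithLp.equiv 2 (ι → ℝ)).symm (V j)) : ℝ) = (V * Vᵀ) i j := by
      rw [PiLp.inner_apply, Matrix.mul_apply]
      simp [mul_comm]
    rw [hinner, hVV]
    have hdi' : d i ≠ 0 := hdi
    by_cases hij : i = j
    · subst hij
      simp [hEdef, Matrix.diagonal_apply_eq, hdi']
    · rw [hEdef, Matrix.diagonal_apply_ne _ hij]
      rw [if_neg]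
      intro hcon
      exact hij (e.injective (Subtype.ext_iff.1 hcon))
  obtain ⟨b, hb⟩ := hortho.exists_orthonormalBasis_extension_of_card_eq
    (finrank_euclideanSpace (𝕜 := ℝ) (ι := ι))
  set O : Matrix ι ι ℝ := fun j j' => b j j' with hOdef
  have hOO : O * Oᵀ = 1 := by
    ext j j'
    rw [Matrix.mul_apply, Matrix.one_apply]
    have h := orthonormal_iff_ite.1 b.orthonormal j j'
    rw [PiLp.inner_apply] at h
    simpa [hOdef, Matrix.transpose_apply, Matrix.transpose, Matrix.of_apply, mul_comm] using h
  set F : Matrix (Fin m) ι ℝ := Matrix.of (fun i j => if d i ≠ 0 ∧ j = e i then (1:ℝ) else 0)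
    with hFdef
  have hFO : F * O = V := by
    ext i j'
    rw [Matrix.mul_apply]
    by_cases hdi : d i = 0
    · rw [hVzero i hdi j']
      refine Finset.sum_eq_zero fun k _ => ?_
      simp [hFdef, hdi]
    · have hsum : ∀ k, F i k * O k j' = if k = e i then O k j' else 0 := by
        intro k
        by_cases hk : k = e i <;> simp [hFdef, hdi, hk]
      rw [Finset.sum_congr rfl fun k _ => hsum k, Finset.sum_ite_eq' Finset.univ (e i)]
      simp only [Finset.mem_univ, if_true]
      have hbei : b (e i) = v' (e i) := hb (e i) ⟨i, hdi, rfl⟩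
      rw [hOdef]
      show b (e i) j' = V i j'
      rw [hbei, hv'e]
      rfl
  have hFmulVec : ∀ x : ι → ℝ, F.mulVec x = E.mulVec (x ∘ e) := by
    intro x
    funext i
    rw [Matrix.mulVec, Matrix.mulVec, hEdef]
    show ∑ j, F i j * x j = dotProduct (diagonal (fun i => if d i = 0 then (0:ℝ) else 1) i) (x ∘ e)
    rw [dotProduct]
    by_cases hdi : d i = 0
    · rw [Finset.sum_eq_zero fun k _ => by simp [hFdef, hdi],
        Finset.sum_eq_zero fun k _ => ?_]
      rcases eq_or_ne i k with rfl | hik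
      · simp [Matrix.diagonal_apply_eq, hdi]
      · simp [Matrix.diagonal_apply_ne _ hik]
    · have hsum : ∀ k, F i k * x k = if k = e i then x k else 0 := by
        intro k
        by_cases hk : k = e i <;> simp [hFdef, hdi, hk]
      rw [Finset.sum_congr rfl fun k _ => hsum k, Finset.sum_ite_eq' Finset.univ (e i)]
      rw [Finset.sum_eq_single i (fun k _ hki => by simp [Matrix.diagonal_apply_ne' _ hki])
        (by simp)]
      simp [Matrix.diagonal_apply_eq, hdi]
  have hmeas_sel : Measurable fun x : ι → ℝ => x ∘ e :=
    measurable_pi_lambda _ fun k => measurable_pi_apply (e k)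
  have hmapV : (stdGaussian ι).map V.mulVec = (stdGaussian (Fin m)).map E.mulVec := by
    have h1 : V.mulVec = F.mulVec ∘ O.mulVec := by
      funext x
      rw [Function.comp_apply, Matrix.mulVec_mulVec, hFO]
    rw [h1, ← Measure.map_map (measurable_mulVec'' F) (measurable_mulVec'' O),
      stdGaussian_map_orth O hOO]
    have h2' : F.mulVec = E.mulVec ∘ (fun x : ι → ℝ => x ∘ e) := by
      funext x
      exact hFmulVec x
    rw [h2', ← Measure.map_map (measurable_mulVec'' E) hmeas_sel,
      stdGaussian_map_comp_embedding e]
  have hAm : A.mulVec = (U * diagonal (fun i => Real.sqrt (d i))).mulVec ∘ V.mulVec := by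
    funext x
    rw [Function.comp_apply, Matrix.mulVec_mulVec, hfact]
  rw [hAm, ← Measure.map_map (measurable_mulVec'' _) (measurable_mulVec'' V), hmapV,
    Measure.map_map (measurable_mulVec'' _) (measurable_mulVec'' E)]
  congr 1
  funext x
  rw [Function.comp_apply, Matrix.mulVec_mulVec]

theorem map_mulVec_eq_of_gram {m : ℕ} {ι κ : Type*} [Fintype ι] [DecidableEq ι]
    [Fintype κ] [DecidableEq κ] (eι : Fin m ↪ ι) (eκ : Fin m ↪ κ)
    (A : Matrix (Fin m) ι ℝ) (B : Matrix (Fin m) κ ℝ) (h : A * Aᵀ = B * Bᵀ) :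
    (stdGaussian ι).map A.mulVec = (stdGaussian κ).map B.mulVec := by
  have hC : (A * Aᵀ).PosSemidef := by
    have := Matrix.posSemidef_self_mul_conjTranspose A
    rwa [Matrix.conjTranspose_eq_transpose_of_trivial] at this
  rw [map_mulVec_canon eι (A * Aᵀ) hC A rfl, map_mulVec_canon eκ (A * Aᵀ) hC B h.symm]

end Canon

lemma matSqrt_mul_transpose_self {ι : Type*} [Fintype ι] [DecidableEq ι]
    {S : Matrix ι ι ℝ} (hS : S.PosSemidef) : matSqrt S * (matSqrt S)ᵀ = S := by
  rw [matSqrt, dif_pos hS]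
  have hspec := hS.1.spectral_theorem
  rw [Unitary.conjStarAlgAut_apply] at hspec
  have hU1 : star (hS.1.eigenvectorUnitary : Matrix ι ι ℝ) * (hS.1.eigenvectorUnitary : Matrix ι ι ℝ) = 1 :=
    Matrix.mem_unitaryGroup_iff'.1 hS.1.eigenvectorUnitary.2
  have hD : diagonal ((↑) ∘ (√·) ∘ hS.1.eigenvalues : ι → ℝ) * diagonal ((↑) ∘ (√·) ∘ hS.1.eigenvalues)
      = diagonal (RCLike.ofReal ∘ hS.1.eigenvalues) := by
    rw [diagonal_mul_diagonal]; congr 1; funext i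
    simp [Real.mul_self_sqrt (hS.eigenvalues_nonneg i)]
  set U : Matrix ι ι ℝ := (hS.1.eigenvectorUnitary : Matrix ι ι ℝ) with hU
  have hst : star U = Uᵀ := by
    rw [Matrix.star_eq_conjTranspose, Matrix.conjTranspose_eq_transpose_of_trivial]
  rw [hst] at hspec hU1 ⊢
  rw [Matrix.transpose_mul, Matrix.transpose_mul, Matrix.transpose_transpose, Matrix.diagonal_transpose]
  conv_rhs => rw [hspec, ← hD]
  simp only [Matrix.mul_assoc]
  rw [← Matrix.mul_assoc Uᵀ U, hU1, Matrix.one_mul]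

/-- **Finite-dimensional core of Proposition 2.** Averaging the target posterior
predictions over samples `ε ~ N(0, I_{m+n})` of the source posterior
(with covariance `Σˢ = L Lᵀ`, block `*` = query points, block `t` = target
training points) yields a Gaussian whose covariance is the target posterior
covariance `Σ₀` augmented by the boost term
`Σᵇ = Σ_{**} + α Σ_{tt} αᵀ - α Σ_{t*} - Σ_{*t} αᵀ`, where `Σ_{t*} = Σ_{*t}ᵀ` and
the row blocks of `L` are `L_* = L.submatrix Sum.inl id` (first `m` rows) and
`L_t = L.submatrix Sum.inr id` (last `n` rows). -/
theorem boosted_gp_bind (m n : ℕ) (a : Fin m → ℝ) (α : Matrix (Fin m) (Fin n) ℝ)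
    (S0 : Matrix (Fin m) (Fin m) ℝ) (hS0 : S0.PosSemidef)
    (Sqq : Matrix (Fin m) (Fin m) ℝ) (Sqt : Matrix (Fin m) (Fin n) ℝ)
    (Stt : Matrix (Fin n) (Fin n) ℝ)
    (hS : (Matrix.fromBlocks Sqq Sqt Sqtᵀ Stt).PosSemidef)
    (L : Matrix (Fin m ⊕ Fin n) (Fin m ⊕ Fin n) ℝ)
    (hL : L * Lᵀ = Matrix.fromBlocks Sqq Sqt Sqtᵀ Stt) :
    (stdGaussian (Fin m ⊕ Fin n)).bind (fun ε =>
        multiGaussian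
          (a + (L.submatrix Sum.inl id - α * L.submatrix Sum.inr id).mulVec ε) S0)
      = multiGaussian a (S0 + (Sqq + α * Stt * αᵀ - α * Sqtᵀ - Sqt * αᵀ)) := by
  classical
  set L1 : Matrix (Fin m) (Fin m ⊕ Fin n) ℝ := L.submatrix Sum.inl id with hL1
  set L2 : Matrix (Fin n) (Fin m ⊕ Fin n) ℝ := L.submatrix Sum.inr id with hL2
  set B : Matrix (Fin m) (Fin m ⊕ Fin n) ℝ := L1 - α * L2 with hBdef
  -- block identities
  have hsub : ∀ {p q : Type} (r : p → Fin m ⊕ Fin n) (c : q → Fin m ⊕ Fin n),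
      L.submatrix r id * (L.submatrix c id)ᵀ = (L * Lᵀ).submatrix r c := by
    intro p q r c
    rw [Matrix.transpose_submatrix,
      ← Matrix.submatrix_mul L Lᵀ r id c Function.bijective_id]
  have h11 : L1 * L1ᵀ = Sqq := by
    rw [hL1, hsub Sum.inl Sum.inl, hL]
    ext i j; simp [Matrix.fromBlocks]
  have h12 : L1 * L2ᵀ = Sqt := by
    rw [hL1, hL2, hsub Sum.inl Sum.inr, hL]
    ext i j; simp [Matrix.fromBlocks]
  have h21 : L2 * L1ᵀ = Sqtᵀ := by
    rw [hL1, hL2, hsub Sum.inr Sum.inl, hL]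
    ext i j; simp [Matrix.fromBlocks]
  have h22 : L2 * L2ᵀ = Stt := by
    rw [hL2, hsub Sum.inr Sum.inr, hL]
    ext i j; simp [Matrix.fromBlocks]
  have hBB : B * Bᵀ = Sqq + α * Stt * αᵀ - α * Sqtᵀ - Sqt * αᵀ := by
    have k12 : L1 * (L2ᵀ * αᵀ) = Sqt * αᵀ := by rw [← Matrix.mul_assoc, h12]
    have k21 : α * (L2 * L1ᵀ) = α * Sqtᵀ := by rw [h21]
    have k22 : α * (L2 * (L2ᵀ * αᵀ)) = α * Stt * αᵀ := by
      rw [← Matrix.mul_assoc L2, h22, ← Matrix.mul_assoc]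
    rw [hBdef, Matrix.transpose_sub, Matrix.transpose_mul, Matrix.sub_mul, Matrix.mul_sub,
      Matrix.mul_sub, Matrix.mul_assoc α L2 L1ᵀ, Matrix.mul_assoc α L2 (L2ᵀ * αᵀ),
      k12, k21, k22, h11]
    abel
  set Sb : Matrix (Fin m) (Fin m) ℝ := Sqq + α * Stt * αᵀ - α * Sqtᵀ - Sqt * αᵀ with hSb
  have hBBpsd : (B * Bᵀ).PosSemidef := by
    have h := Matrix.posSemidef_self_mul_conjTranspose B
    rwa [Matrix.conjTranspose_eq_transpose_of_trivial] at h
  have hSbpsd : Sb.PosSemidef := by rw [← hBB]; exact hBBpsd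
  have hCt : (S0 + Sb).PosSemidef := hS0.add hSbpsd
  -- measures
  set R0 : Matrix (Fin m) (Fin m) ℝ := matSqrt S0 with hR0
  set Rt : Matrix (Fin m) (Fin m) ℝ := matSqrt (S0 + Sb) with hRt
  set g : ((Fin m ⊕ Fin n) → ℝ) → (Fin m → ℝ) → (Fin m → ℝ) :=
    fun ε x => (a + B.mulVec ε) + R0.mulVec x with hgdef
  have hg : Measurable (Function.uncurry g) := by
    refine measurable_pi_lambda _ fun i => ?_
    have h1 : Measurable fun p : ((Fin m ⊕ Fin n) → ℝ) × (Fin m → ℝ) => B.mulVec p.1 i :=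
      ((measurable_pi_apply i).comp (measurable_mulVec'' B)).comp measurable_fst
    have h2 : Measurable fun p : ((Fin m ⊕ Fin n) → ℝ) × (Fin m → ℝ) => R0.mulVec p.2 i :=
      ((measurable_pi_apply i).comp (measurable_mulVec'' R0)).comp measurable_snd
    exact ((h1.const_add (a i)).add h2)
  have hLHS : (stdGaussian (Fin m ⊕ Fin n)).bind (fun ε => multiGaussian (a + B.mulVec ε) S0)
      = ((stdGaussian (Fin m ⊕ Fin n)).prod (stdGaussian (Fin m))).map (Function.uncurry g) := by
    rw [← bind_eq_map_prod _ _ g hg]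
    rfl
  set q := MeasurableEquiv.sumPiEquivProdPi (fun _ : (Fin m ⊕ Fin n) ⊕ Fin m => ℝ) with hq
  have hprod : (stdGaussian ((Fin m ⊕ Fin n) ⊕ Fin m)).map q
      = (stdGaussian (Fin m ⊕ Fin n)).prod (stdGaussian (Fin m)) :=
    (measurePreserving_sumPiEquivProdPi (fun _ : (Fin m ⊕ Fin n) ⊕ Fin m => gaussianReal 0 1)).map_eq
  set M : Matrix (Fin m) ((Fin m ⊕ Fin n) ⊕ Fin m) ℝ := Matrix.fromCols B R0 with hM
  have haddmeas : Measurable fun x : Fin m → ℝ => a + x :=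
    measurable_pi_lambda _ fun i => (show Measurable fun c : Fin m → ℝ => (a + c) i by fun_prop)
  have hGq : (Function.uncurry g) ∘ q = (fun y => a + y) ∘ M.mulVec := by
    funext y
    show g (y ∘ Sum.inl) (y ∘ Sum.inr) = a + M.mulVec y
    have hy : M.mulVec y = B.mulVec (y ∘ Sum.inl) + R0.mulVec (y ∘ Sum.inr) := by
      have h := Matrix.fromCols_mulVec_sumElim B R0 (y ∘ Sum.inl) (y ∘ Sum.inr)
      rw [Sum.elim_comp_inl_inr y] at h
      rw [hM, h]
    rw [hy]
    show a + B.mulVec (y ∘ Sum.inl) + R0.mulVec (y ∘ Sum.inr)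
        = a + (B.mulVec (y ∘ Sum.inl) + R0.mulVec (y ∘ Sum.inr))
    rw [add_assoc]
  have hgram : M * Mᵀ = Rt * Rtᵀ := by
    rw [hM, Matrix.transpose_fromCols, Matrix.fromCols_mul_fromRows,
      hRt, matSqrt_mul_transpose_self hCt, hBB, hR0, matSqrt_mul_transpose_self hS0]
    abel
  have hcore : (stdGaussian ((Fin m ⊕ Fin n) ⊕ Fin m)).map M.mulVec
      = (stdGaussian (Fin m)).map Rt.mulVec :=
    map_mulVec_eq_of_gram ⟨Sum.inr, Sum.inr_injective⟩ (Function.Embedding.refl _) M Rt hgram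
  calc (stdGaussian (Fin m ⊕ Fin n)).bind (fun ε => multiGaussian (a + B.mulVec ε) S0)
      = ((stdGaussian (Fin m ⊕ Fin n)).prod (stdGaussian (Fin m))).map (Function.uncurry g) :=
        hLHS
    _ = ((stdGaussian ((Fin m ⊕ Fin n) ⊕ Fin m)).map q).map (Function.uncurry g) := by
        rw [hprod]
    _ = (stdGaussian ((Fin m ⊕ Fin n) ⊕ Fin m)).map ((Function.uncurry g) ∘ q) :=
        Measure.map_map hg q.measurable
    _ = (stdGaussian ((Fin m ⊕ Fin n) ⊕ Fin m)).map ((fun y => a + y) ∘ M.mulVec) := by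
        rw [hGq]
    _ = ((stdGaussian ((Fin m ⊕ Fin n) ⊕ Fin m)).map M.mulVec).map (fun y => a + y) :=
        (Measure.map_map haddmeas (measurable_mulVec'' M)).symm
    _ = ((stdGaussian (Fin m)).map Rt.mulVec).map (fun y => a + y) := by rw [hcore]
    _ = multiGaussian a (S0 + Sb) := by
        rw [multiGaussian, Measure.map_map haddmeas (measurable_mulVec'' Rt)]
        rfl
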